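/- arXiv:2107.11866 — 8 statements merged into one kernel-verified Lean document; each statement's English description precedes it below -/
import Mathlib

section
/- The deformed A3 reduced map φ̂(y,w) = ((d(y+1)w + c)/y, (dw+c)/(yw) + (e-c)/(w(y+1))) preserves the symplectic form d(log y) ∧ d(log w); equivalently, if (ỹ, w̃) = φ̂(y,w), then det Dφ̂(y,w) · y w = ỹ w̃ wherever defined. -/
lemma fd_dir1 (f : ℝ × ℝ → ℝ) (y w D : ℝ) (hf : DifferentiableAt ℝ f (y, w))
    (h : HasDerivAt (fun t => f (t, w)) D y) : fderiv ℝ f (y, w) (1, 0) = D := by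
  have := hf.hasFDerivAt.comp_hasDerivAt y ((hasDerivAt_id y).prodMk (hasDerivAt_const y w))
  simpa using this.unique h

lemma fd_dir2 (f : ℝ × ℝ → ℝ) (y w D : ℝ) (hf : DifferentiableAt ℝ f (y, w))
    (h : HasDerivAt (fun t => f (y, t)) D w) : fderiv ℝ f (y, w) (0, 1) = D := by
  have := hf.hasFDerivAt.comp_hasDerivAt w ((hasDerivAt_const w y).prodMk (hasDerivAt_id w))
  simpa using this.unique h

/-- The deformed `A₃` reduced map
`φ̂(y,w) = ((d(y+1)w + c)/y, (dw+c)/(yw) + (e-c)/(w(y+1)))`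
preserves the symplectic form `d(log y) ∧ d(log w)`: the determinant of its Jacobian
matrix at `(y,w)` times `yw` equals the product of the coordinates of the image. -/
theorem deformedA3_symplectic (c d e y w : ℝ)
    (hy : y ≠ 0) (hw : w ≠ 0) (hy1 : y + 1 ≠ 0) :
    (Matrix.det
      !![fderiv ℝ (fun p : ℝ × ℝ => (d * (p.1 + 1) * p.2 + c) / p.1) (y, w) (1, 0),
         fderiv ℝ (fun p : ℝ × ℝ => (d * (p.1 + 1) * p.2 + c) / p.1) (y, w) (0, 1);
         fderiv ℝ (fun p : ℝ × ℝ =>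
            (d * p.2 + c) / (p.1 * p.2) + (e - c) / (p.2 * (p.1 + 1))) (y, w) (1, 0),
         fderiv ℝ (fun p : ℝ × ℝ =>
            (d * p.2 + c) / (p.1 * p.2) + (e - c) / (p.2 * (p.1 + 1))) (y, w) (0, 1)])
      * (y * w)
      = ((d * (y + 1) * w + c) / y)
        * ((d * w + c) / (y * w) + (e - c) / (w * (y + 1))) := by
  have hyw : y * w ≠ 0 := mul_ne_zero hy hw
  have hwy1 : w * (y + 1) ≠ 0 := mul_ne_zero hw hy1
  have hd1 : DifferentiableAt ℝ (fun p : ℝ × ℝ => (d * (p.1 + 1) * p.2 + c) / p.1) (y, w) := by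
    simp only [div_eq_mul_inv]
    exact ((((differentiableAt_fst.add_const 1).const_mul d).mul differentiableAt_snd).add_const
      c).mul (differentiableAt_fst.inv hy)
  have hd2 : DifferentiableAt ℝ (fun p : ℝ × ℝ =>
      (d * p.2 + c) / (p.1 * p.2) + (e - c) / (p.2 * (p.1 + 1))) (y, w) := by
    simp only [div_eq_mul_inv]
    exact (((differentiableAt_snd.const_mul d).add_const c).mul
        ((differentiableAt_fst.mul differentiableAt_snd).inv hyw)).add
      ((differentiableAt_const (e - c)).mul
        ((differentiableAt_snd.mul (differentiableAt_fst.add_const 1)).inv hwy1))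
  have h11 := ((((hasDerivAt_id y).add_const 1).const_mul d).mul_const w |>.add_const c).div
    (hasDerivAt_id y) hy
  have h12 := (((hasDerivAt_id w).const_mul (d * (y + 1))).add_const c).div_const y
  have h21 := ((hasDerivAt_const y (d * w + c)).div ((hasDerivAt_id y).mul_const w) hyw).add
    ((hasDerivAt_const y (e - c)).div
      ((((hasDerivAt_id y).add_const 1).const_mul w)) hwy1)
  have h22 := (((hasDerivAt_id w).const_mul d).add_const c).div
      ((hasDerivAt_id w).const_mul y) hyw |>.add
    ((hasDerivAt_const w (e - c)).div ((hasDerivAt_id w).mul_const (y + 1)) hwy1)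
  rw [fd_dir1 _ y w _ hd1 h11, fd_dir2 _ y w _ hd1 h12,
      fd_dir1 _ y w _ hd2 h21, fd_dir2 _ y w _ hd2 h22,
      Matrix.det_fin_two_of]
  simp only [id_eq]
  field_simp
  ring
end

section
/- When c = e, the function K_1(y,w) = (yw + w + d)(y + dw + c)/(yw) is a first integral of the map φ̂(y,w) = ((d(y+1)w + c)/y, (dw+c)/(yw)): K_1(φ̂(y,w)) = K_1(y,w) for all (y,w) where both sides are defined. -/
/-- The deformed `A₃` reduced map with `e = c`. -/
def deformedA3 {F : Type*} [Field F] (c d : F) (p : F × F) : F × F :=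
  ((d * (p.1 + 1) * p.2 + c) / p.1, (d * p.2 + c) / (p.1 * p.2))

/-- When `e = c`, `K₁(y,w) = (yw + w + d)(y + dw + c)/(yw)` is a first integral of the
deformed `A₃` reduced map. -/
theorem deformedA3_K1_invariant {F : Type*} [Field F] (c d y w : F)
    (hy : y ≠ 0) (hw : w ≠ 0)
    (hy' : (deformedA3 c d (y, w)).1 ≠ 0) (hw' : (deformedA3 c d (y, w)).2 ≠ 0) :
    ((deformedA3 c d (y, w)).1 * (deformedA3 c d (y, w)).2 + (deformedA3 c d (y, w)).2 + d)
        * ((deformedA3 c d (y, w)).1 + d * (deformedA3 c d (y, w)).2 + c)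
        / ((deformedA3 c d (y, w)).1 * (deformedA3 c d (y, w)).2)
      = (y * w + w + d) * (y + d * w + c) / (y * w) := by
  have hm : (deformedA3 c d (y, w)).1 * (deformedA3 c d (y, w)).2 ≠ 0 := mul_ne_zero hy' hw'
  rw [div_eq_div_iff hm (mul_ne_zero hy hw)]
  simp only [deformedA3] at *
  have h1 : d * (y + 1) * w + c ≠ 0 := by
    intro h; apply hy'; simp [h]
  have h2 : d * w + c ≠ 0 := by
    intro h; apply hw'; simp [h]
  rw [div_mul_div_comm]
  field_simp
  ring
end

section
/- When c = d², the map φ̂(y,w) = ((d(y+1)w + d²)/y, d(w+d)/(yw)) has period 3: φ̂³(y,w) = (y,w) for all (y,w) in the domain where all three iterates are defined. -/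
/-- The deformed `A₃` reduced map with `c = e = d²`. -/
def deformedA3sq {F : Type*} [Field F] (d : F) (p : F × F) : F × F :=
  ((d * (p.1 + 1) * p.2 + d ^ 2) / p.1, d * (p.2 + d) / (p.1 * p.2))

/-- When `c = d²`, the deformed `A₃` reduced map has period 3. -/
theorem deformedA3sq_period_three {F : Type*} [Field F] (d : F) (hd : d ≠ 0)
    (y w : F) (hy : y ≠ 0) (hw : w ≠ 0)
    (h1 : (deformedA3sq d (y, w)).1 ≠ 0) (h2 : (deformedA3sq d (y, w)).2 ≠ 0)
    (h3 : (deformedA3sq d (deformedA3sq d (y, w))).1 ≠ 0)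
    (h4 : (deformedA3sq d (deformedA3sq d (y, w))).2 ≠ 0) :
    deformedA3sq d (deformedA3sq d (deformedA3sq d (y, w))) = (y, w) := by
  have hN : d * (y + 1) * w + d ^ 2 ≠ 0 := by
    intro h
    exact h1 (by simp [deformedA3sq, h])
  have hwd : w + d ≠ 0 := by
    intro h
    exact h2 (by simp [deformedA3sq, h])
  have key1 : deformedA3sq d (deformedA3sq d (y, w)) =
      (d * (d * w + d ^ 2 + y) / (y * w), y / (w + d)) := by
    have hN2 : (y + 1) * w + d ≠ 0 := fun h => hN (by linear_combination d * h)
    have hN3 : w * (y + 1) + d ≠ 0 := fun h => hN (by linear_combination d * h)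
    simp only [deformedA3sq]
    refine Prod.ext ?_ ?_ <;> simp only <;> field_simp [hN2, hN3] <;> ring
  have hM : d * w + d ^ 2 + y ≠ 0 := by
    rw [key1] at h3
    simp only at h3
    intro h
    exact h3 (by rw [h]; simp)
  rw [key1]
  have hM2 : d * (w + d) + y ≠ 0 := fun h => hM (by linear_combination h)
  simp only [deformedA3sq]
  refine Prod.ext ?_ ?_ <;> simp only <;> field_simp [hM, hM2] <;> ring
end

section
/- When c = d², the function K_2(y,w) = (w³y + d(y+1)w² + (y² + 2d²)w + d³)/(yw(w+d)) is a first integral of the period-3 map φ̂(y,w) = ((d(y+1)w + d²)/y, d(w+d)/(yw)). -/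
/-- The second first integral `K₂` of the deformed `A₃` reduced map with `c = d²`. -/
def deformedA3K2 {F : Type*} [Field F] (d y w : F) : F :=
  (w ^ 3 * y + d * (y + 1) * w ^ 2 + (y ^ 2 + 2 * d ^ 2) * w + d ^ 3) / (y * w * (w + d))

set_option maxHeartbeats 2000000 in
/-- When `c = d²`, `K₂` is a first integral of the period-3 deformed `A₃` map. -/
theorem deformedA3sq_K2_invariant {F : Type*} [Field F] (d : F) (hd : d ≠ 0)
    (y w : F) (hy : y ≠ 0) (hw : w ≠ 0) (hwd : w + d ≠ 0)
    (hy' : (deformedA3sq d (y, w)).1 ≠ 0) (hw' : (deformedA3sq d (y, w)).2 ≠ 0)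
    (hwd' : (deformedA3sq d (y, w)).2 + d ≠ 0) :
    deformedA3K2 d (deformedA3sq d (y, w)).1 (deformedA3sq d (y, w)).2
      = deformedA3K2 d y w := by
  simp only [deformedA3sq] at *
  simp only [deformedA3K2]
  have hden1 : ((d * (y + 1) * w + d ^ 2) / y) * (d * (w + d) / (y * w)) *
      ((d * (w + d) / (y * w)) + d) ≠ 0 :=
    mul_ne_zero (mul_ne_zero hy' hw') hwd'
  have hden2 : y * w * (w + d) ≠ 0 := mul_ne_zero (mul_ne_zero hy hw) hwd
  rw [div_eq_div_iff hden1 hden2]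
  field_simp
  ring_nf
end

section
/- The maps φ̂(y,w) = ((d(y+1)w + c)/y, (dw+c)/(yw)) and the QRT-type map ψ̂ defined by ψ̂(y,w) = (ȳ, w̄) with ȳ = (dw+c)(w+d)/(wy) and w̄ = (ȳ + c)/(w(ȳ + 1)) commute: φ̂ ∘ ψ̂ = ψ̂ ∘ φ̂ as birational maps (i.e., they agree at every point where both compositions are defined). -/
/-- The deformed `A₃` reduced map `φ̂` (with `e = c`). -/
def phiHat {F : Type*} [Field F] (c d : F) (p : F × F) : F × F :=
  ((d * (p.1 + 1) * p.2 + c) / p.1, (d * p.2 + c) / (p.1 * p.2))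

/-- The QRT-type map `ψ̂` preserving the same pencil of biquadratic curves:
`ȳ = (dw+c)(w+d)/(wy)` and `w̄ = (ȳ + c)/(w(ȳ + 1))`. -/
def psiHat {F : Type*} [Field F] (c d : F) (p : F × F) : F × F :=
  ((d * p.2 + c) * (p.2 + d) / (p.2 * p.1),
   ((d * p.2 + c) * (p.2 + d) / (p.2 * p.1) + c)
      / (p.2 * ((d * p.2 + c) * (p.2 + d) / (p.2 * p.1) + 1)))


set_option maxHeartbeats 4000000 in
/-- The maps `φ̂` and `ψ̂` commute wherever both compositions are defined. -/
theorem phiHat_psiHat_commute {F : Type*} [Field F] [CharZero F] (c d : F)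
    (y w : F) (hy : y ≠ 0) (hw : w ≠ 0)
    (hq1 : (phiHat c d (y, w)).1 ≠ 0) (hq2 : (phiHat c d (y, w)).2 ≠ 0)
    (hr1 : (psiHat c d (y, w)).1 ≠ 0) (hr2 : (psiHat c d (y, w)).2 ≠ 0)
    (hden0 : (psiHat c d (y, w)).1 + 1 ≠ 0)
    (hden1 : (psiHat c d (phiHat c d (y, w))).1 + 1 ≠ 0) :
    phiHat c d (psiHat c d (y, w)) = psiHat c d (phiHat c d (y, w)) := by
  simp only [phiHat, psiHat] at *
  have hq1' := hq1; have hq2' := hq2; have hr1' := hr1; have hr2' := hr2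
  rw [div_ne_zero_iff] at hq1' hq2' hr1' hr2'
  obtain ⟨hq1n, -⟩ := hq1'
  obtain ⟨hq2n, -⟩ := hq2'
  obtain ⟨hr1n, -⟩ := hr1'
  obtain ⟨hr2n, -⟩ := hr2'
  -- polynomial forms of the denominator conditions
  have hd0 : (d * w + c) * (w + d) + w * y ≠ 0 := by
    intro h
    apply hden0
    rw [div_add' _ _ _ (mul_ne_zero hw hy), one_mul, h]
    exact zero_div _
  have hr2p : (d * w + c) * (w + d) + c * (w * y) ≠ 0 := by
    intro h
    apply hr2n
    rw [div_add' _ _ _ (mul_ne_zero hw hy), h]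
    exact zero_div _
  -- rewrite nested fractions into single polynomial fractions
  have er2 : ((d * w + c) * (w + d) / (w * y) + c)
      / (w * ((d * w + c) * (w + d) / (w * y) + 1))
      = ((d * w + c) * (w + d) + c * (w * y)) / (w * ((d * w + c) * (w + d) + w * y)) := by
    rw [div_eq_div_iff (mul_ne_zero hw hden0) (mul_ne_zero hw hd0)]
    field_simp
  have es1 : (d * ((d * w + c) / (y * w)) + c) * ((d * w + c) / (y * w) + d)
      / ((d * w + c) / (y * w) * ((d * (y + 1) * w + c) / y))
      = (d * (d * w + c) + c * (y * w)) * ((d * w + c) + d * (y * w))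
        / (w * ((d * w + c) * (d * (y + 1) * w + c))) := by
    rw [div_eq_div_iff (mul_ne_zero hq2 hq1)
      (mul_ne_zero hw (mul_ne_zero hq2n hq1n))]
    field_simp
  rw [es1] at hden1 ⊢
  rw [er2]
  have hAQ : w * ((d * w + c) * (d * (y + 1) * w + c)) ≠ 0 :=
    mul_ne_zero hw (mul_ne_zero hq2n hq1n)
  have hN : (d * (d * w + c) + c * (y * w)) * ((d * w + c) + d * (y * w))
      + w * ((d * w + c) * (d * (y + 1) * w + c)) ≠ 0 := by
    intro h
    apply hden1
    rw [div_add' _ _ _ hAQ, one_mul, h]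
    exact zero_div _
  rw [Prod.mk.injEq]
  have hwd : w + d ≠ 0 := right_ne_zero_of_mul hr1n
  have h1 : d * w * (y + 1) + c ≠ 0 := by
    rw [show d * w * (y + 1) + c = d * (y + 1) * w + c by ring]; exact hq1n
  have h2 : (d * w + c) * (w + d) + w * c * y ≠ 0 := by
    rw [show (d * w + c) * (w + d) + w * c * y = (d * w + c) * (w + d) + c * (w * y) by ring]; exact hr2p
  have h3 : (d * (d * w + c) + w * c * y) * (d * w + c + d * w * y) + w * (d * w + c) * (d * w * (y + 1) + c) ≠ 0 := by
    rw [show (d * (d * w + c) + w * c * y) * (d * w + c + d * w * y) + w * (d * w + c) * (d * w * (y + 1) + c) = (d * (d * w + c) + c * (y * w)) * ((d * w + c) + d * (y * w))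
      + w * ((d * w + c) * (d * (y + 1) * w + c)) by ring]; exact hN
  constructor
  · field_simp
    ring
  · field_simp
    ring
end

section
/- The tau-function substitution y_n = τ_{n-2}τ_{n+1}/(τ_{n-1}τ_n), w_n = σ_{n+1}τ_{n-1}/(σ_n τ_n) transforms solutions of the bilinear system σ_{n+2}τ_{n-2} = d σ_{n+1}τ_{n-1} + c σ_n τ_n and σ_n τ_{n+2} = σ_{n+2}τ_n + d σ_{n+1}τ_{n+1} into solutions of the map (y_{n+1}, w_{n+1}) = ((d(y_n+1)w_n + c)/y_n, (dw_n+c)/(y_n w_n)). -/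
/-- The tau-function substitution `yₙ = τ_{n-2}τ_{n+1}/(τ_{n-1}τₙ)`,
`wₙ = σ_{n+1}τ_{n-1}/(σₙτₙ)` transforms solutions of the bilinear system
`σ_{n+2}τ_{n-2} = d σ_{n+1}τ_{n-1} + c σₙτₙ`, `σₙτ_{n+2} = σ_{n+2}τₙ + d σ_{n+1}τ_{n+1}`
into solutions of the deformed `A₃` reduced map (with `e = c`). -/
theorem tau_substitution_solves_A3map {F : Type*} [Field F] (c d : F)
    (σ τ : ℤ → F) (hσ : ∀ n, σ n ≠ 0) (hτ : ∀ n, τ n ≠ 0)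
    (hbil1 : ∀ n : ℤ, σ (n + 2) * τ (n - 2) = d * σ (n + 1) * τ (n - 1) + c * σ n * τ n)
    (hbil2 : ∀ n : ℤ, σ n * τ (n + 2) = σ (n + 2) * τ n + d * σ (n + 1) * τ (n + 1))
    (y w : ℤ → F)
    (hy : ∀ n : ℤ, y n = τ (n - 2) * τ (n + 1) / (τ (n - 1) * τ n))
    (hw : ∀ n : ℤ, w n = σ (n + 1) * τ (n - 1) / (σ n * τ n)) :
    ∀ n : ℤ, y (n + 1) = (d * (y n + 1) * w n + c) / y n ∧
      w (n + 1) = (d * w n + c) / (y n * w n) := by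
  intro n
  have e1 : n + 1 - 2 = n - 1 := by ring
  have e2 : n + 1 + 1 = n + 2 := by ring
  have e3 : n + 1 - 1 = n := by ring
  have h1 := hbil1 n
  have h2 := hbil2 n
  constructor
  · rw [hy (n + 1), hy n, hw n, e1, e2, e3]
    have nz : ∀ m : ℤ, τ m ≠ 0 := hτ
    field_simp [hσ n, hσ (n+1), nz (n-2), nz (n-1), nz n, nz (n+1), nz (n+2)]
    linear_combination τ (n-2) * h2 + τ n * h1
  · rw [hw (n + 1), hy n, hw n, e2, e3]
    have nz : ∀ m : ℤ, τ m ≠ 0 := hτ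
    field_simp [hσ n, hσ (n+1), nz (n-2), nz (n-1), nz n, nz (n+1), nz (n+2)]
    linear_combination h1
end

section
/- The undeformed A4 cluster map φ (with a_1 = a_4 = b_1 = b_4 = 1), defined by x_1' x_1 = 1 + x_2, x_2' x_2 = 1 + x_1' x_3, x_3' x_3 = 1 + x_2' x_4, x_4' x_4 = 1 + x_3', is periodic with period 7: φ⁷(x) = x for all x in the domain where all iterates are defined. -/
set_option maxHeartbeats 1000000

/-- The undeformed `A₄` cluster map `φ = μ₄μ₃μ₂μ₁` (with `a₁ = a₄ = b₁ = b₄ = 1`). -/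
def A4map {F : Type*} [Field F] (x : Fin 4 → F) : Fin 4 → F :=
  let x₁' := (1 + x 1) / x 0
  let x₂' := (1 + x₁' * x 2) / x 1
  let x₃' := (1 + x₂' * x 3) / x 2
  let x₄' := (1 + x₃') / x 3
  ![x₁', x₂', x₃', x₄']

/-- Characterization of `A4map v = y` via the exchange relations. -/
lemma A4map_eq {F : Type*} [Field F] (v y : Fin 4 → F)
    (h0 : v 0 ≠ 0) (h1 : v 1 ≠ 0) (h2 : v 2 ≠ 0) (h3 : v 3 ≠ 0)
    (e0 : y 0 * v 0 = 1 + v 1) (e1 : y 1 * v 1 = 1 + y 0 * v 2)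
    (e2 : y 2 * v 2 = 1 + y 1 * v 3) (e3 : y 3 * v 3 = 1 + y 2) :
    A4map v = y := by
  have E0 : (1 + v 1) / v 0 = y 0 := by rw [← e0]; field_simp
  have E1 : (1 + y 0 * v 2) / v 1 = y 1 := by rw [← e1]; field_simp
  have E2 : (1 + y 1 * v 3) / v 2 = y 2 := by rw [← e2]; field_simp
  have E3 : (1 + y 2) / v 3 = y 3 := by rw [← e3]; field_simp
  funext i
  fin_cases i <;>
    simp only [A4map, Matrix.cons_val_zero, Matrix.cons_val_one, Matrix.head_cons,
      Matrix.cons_val_two, Matrix.tail_cons, Matrix.cons_val_three, Fin.isValue] <;>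
    rw [E0] <;> [skip; rw [E1]; rw [E1, E2]; rw [E1, E2, E3]] <;> rfl

/-- The undeformed `A₄` cluster map is periodic with period 7 wherever all iterates
are defined. -/
theorem A4map_period_seven {F : Type*} [Field F] [CharZero F] (x : Fin 4 → F)
    (h : ∀ k < 7, ∀ i, (A4map^[k] x) i ≠ 0) :
    A4map^[7] x = x := by
  have ha : x 0 ≠ 0 := h 0 (by norm_num) 0
  have hb : x 1 ≠ 0 := h 0 (by norm_num) 1
  have hc : x 2 ≠ 0 := h 0 (by norm_num) 2
  have hd : x 3 ≠ 0 := h 0 (by norm_num) 3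
  have h1 : A4map^[1] x = ![(1+(x 1))/((x 0)), ((x 2)+(x 1)*(x 2)+(x 0))/((x 0)*(x 1)), ((x 2)*(x 3)+(x 1)*(x 2)*(x 3)+(x 0)*(x 3)+(x 0)*(x 1))/((x 0)*(x 1)*(x 2)), ((x 2)*(x 3)+(x 1)*(x 2)*(x 3)+(x 0)*(x 3)+(x 0)*(x 1)+(x 0)*(x 1)*(x 2))/((x 0)*(x 1)*(x 2)*(x 3))] := by
    show A4map x = _
    refine A4map_eq _ _ ha hb hc hd ?_ ?_ ?_ ?_ <;>
      simp only [Matrix.cons_val_zero, Matrix.cons_val_one, Matrix.head_cons, Matrix.cons_val_two, Matrix.tail_cons, Matrix.cons_val_three, Fin.isValue] <;>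
      field_simp <;> ring
  have n1 : ((1+(x 1))/((x 0))) ≠ 0 := by
    have t := h 1 (by norm_num) 0
    rw [h1] at t
    simpa only [Matrix.cons_val_zero, Matrix.cons_val_one, Matrix.head_cons, Matrix.cons_val_two, Matrix.tail_cons, Matrix.cons_val_three, Fin.isValue] using t
  have n2 : (((x 2)+(x 1)*(x 2)+(x 0))/((x 0)*(x 1))) ≠ 0 := by
    have t := h 1 (by norm_num) 1
    rw [h1] at t
    simpa only [Matrix.cons_val_zero, Matrix.cons_val_one, Matrix.head_cons, Matrix.cons_val_two, Matrix.tail_cons, Matrix.cons_val_three, Fin.isValue] using t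
  have n3 : (((x 2)*(x 3)+(x 1)*(x 2)*(x 3)+(x 0)*(x 3)+(x 0)*(x 1))/((x 0)*(x 1)*(x 2))) ≠ 0 := by
    have t := h 1 (by norm_num) 2
    rw [h1] at t
    simpa only [Matrix.cons_val_zero, Matrix.cons_val_one, Matrix.head_cons, Matrix.cons_val_two, Matrix.tail_cons, Matrix.cons_val_three, Fin.isValue] using t
  have n4 : (((x 2)*(x 3)+(x 1)*(x 2)*(x 3)+(x 0)*(x 3)+(x 0)*(x 1)+(x 0)*(x 1)*(x 2))/((x 0)*(x 1)*(x 2)*(x 3))) ≠ 0 := by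
    have t := h 1 (by norm_num) 3
    rw [h1] at t
    simpa only [Matrix.cons_val_zero, Matrix.cons_val_one, Matrix.head_cons, Matrix.cons_val_two, Matrix.tail_cons, Matrix.cons_val_three, Fin.isValue] using t
  have h2 : A4map^[2] x = ![((x 2)+(x 0))/((x 1)), ((x 2)*(x 3)+(x 0)*(x 3)+(x 0)*(x 1))/((x 1)*(x 2)), ((x 2)*(x 3)+(x 0)*(x 3)+(x 0)*(x 1)+(x 0)*(x 1)*(x 2))/((x 1)*(x 2)*(x 3)), ((x 0))/(1)] := by
    rw [Function.iterate_succ_apply', h1]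
    refine A4map_eq _ _ n1 n2 n3 n4 ?_ ?_ ?_ ?_ <;>
      simp only [Matrix.cons_val_zero, Matrix.cons_val_one, Matrix.head_cons, Matrix.cons_val_two, Matrix.tail_cons, Matrix.cons_val_three, Fin.isValue, div_mul_div_comm] <;>
      rw [add_div' _ _ _ (by apply_rules [mul_ne_zero, one_ne_zero]), div_eq_div_iff (by apply_rules [mul_ne_zero, one_ne_zero]) (by apply_rules [mul_ne_zero, one_ne_zero])] <;> ring
  have n5 : (((x 2)+(x 0))/((x 1))) ≠ 0 := by
    have t := h 2 (by norm_num) 0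
    rw [h2] at t
    simpa only [Matrix.cons_val_zero, Matrix.cons_val_one, Matrix.head_cons, Matrix.cons_val_two, Matrix.tail_cons, Matrix.cons_val_three, Fin.isValue] using t
  have n6 : (((x 2)*(x 3)+(x 0)*(x 3)+(x 0)*(x 1))/((x 1)*(x 2))) ≠ 0 := by
    have t := h 2 (by norm_num) 1
    rw [h2] at t
    simpa only [Matrix.cons_val_zero, Matrix.cons_val_one, Matrix.head_cons, Matrix.cons_val_two, Matrix.tail_cons, Matrix.cons_val_three, Fin.isValue] using t
  have n7 : (((x 2)*(x 3)+(x 0)*(x 3)+(x 0)*(x 1)+(x 0)*(x 1)*(x 2))/((x 1)*(x 2)*(x 3))) ≠ 0 := by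
    have t := h 2 (by norm_num) 2
    rw [h2] at t
    simpa only [Matrix.cons_val_zero, Matrix.cons_val_one, Matrix.head_cons, Matrix.cons_val_two, Matrix.tail_cons, Matrix.cons_val_three, Fin.isValue] using t
  have h3 : A4map^[3] x = ![((x 3)+(x 1))/((x 2)), ((x 3)+(x 1)+(x 1)*(x 2))/((x 2)*(x 3)), ((x 1))/(1), (1+(x 1))/((x 0))] := by
    rw [Function.iterate_succ_apply', h2]
    refine A4map_eq _ _ n5 n6 n7 (div_ne_zero ha one_ne_zero) ?_ ?_ ?_ ?_ <;>
      simp only [Matrix.cons_val_zero, Matrix.cons_val_one, Matrix.head_cons, Matrix.cons_val_two, Matrix.tail_cons, Matrix.cons_val_three, Fin.isValue, div_mul_div_comm] <;>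
      rw [add_div' _ _ _ (by apply_rules [mul_ne_zero, one_ne_zero]), div_eq_div_iff (by apply_rules [mul_ne_zero, one_ne_zero]) (by apply_rules [mul_ne_zero, one_ne_zero])] <;> ring
  have n8 : (((x 3)+(x 1))/((x 2))) ≠ 0 := by
    have t := h 3 (by norm_num) 0
    rw [h3] at t
    simpa only [Matrix.cons_val_zero, Matrix.cons_val_one, Matrix.head_cons, Matrix.cons_val_two, Matrix.tail_cons, Matrix.cons_val_three, Fin.isValue] using t
  have n9 : (((x 3)+(x 1)+(x 1)*(x 2))/((x 2)*(x 3))) ≠ 0 := by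
    have t := h 3 (by norm_num) 1
    rw [h3] at t
    simpa only [Matrix.cons_val_zero, Matrix.cons_val_one, Matrix.head_cons, Matrix.cons_val_two, Matrix.tail_cons, Matrix.cons_val_three, Fin.isValue] using t
  have h4 : A4map^[4] x = ![(1+(x 2))/((x 3)), ((x 2))/(1), ((x 2)+(x 1)*(x 2)+(x 0))/((x 0)*(x 1)), ((x 2)+(x 0))/((x 1))] := by
    rw [Function.iterate_succ_apply', h3]
    refine A4map_eq _ _ n8 n9 (div_ne_zero hb one_ne_zero) n1 ?_ ?_ ?_ ?_ <;>
      simp only [Matrix.cons_val_zero, Matrix.cons_val_one, Matrix.head_cons, Matrix.cons_val_two, Matrix.tail_cons, Matrix.cons_val_three, Fin.isValue, div_mul_div_comm] <;>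
      rw [add_div' _ _ _ (by apply_rules [mul_ne_zero, one_ne_zero]), div_eq_div_iff (by apply_rules [mul_ne_zero, one_ne_zero]) (by apply_rules [mul_ne_zero, one_ne_zero])] <;> ring
  have n10 : ((1+(x 2))/((x 3))) ≠ 0 := by
    have t := h 4 (by norm_num) 0
    rw [h4] at t
    simpa only [Matrix.cons_val_zero, Matrix.cons_val_one, Matrix.head_cons, Matrix.cons_val_two, Matrix.tail_cons, Matrix.cons_val_three, Fin.isValue] using t
  have h5 : A4map^[5] x = ![((x 3))/(1), ((x 2)*(x 3)+(x 1)*(x 2)*(x 3)+(x 0)*(x 3)+(x 0)*(x 1))/((x 0)*(x 1)*(x 2)), ((x 2)*(x 3)+(x 0)*(x 3)+(x 0)*(x 1))/((x 1)*(x 2)), ((x 3)+(x 1))/((x 2))] := by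
    rw [Function.iterate_succ_apply', h4]
    refine A4map_eq _ _ n10 (div_ne_zero hc one_ne_zero) n2 n5 ?_ ?_ ?_ ?_ <;>
      simp only [Matrix.cons_val_zero, Matrix.cons_val_one, Matrix.head_cons, Matrix.cons_val_two, Matrix.tail_cons, Matrix.cons_val_three, Fin.isValue, div_mul_div_comm] <;>
      rw [add_div' _ _ _ (by apply_rules [mul_ne_zero, one_ne_zero]), div_eq_div_iff (by apply_rules [mul_ne_zero, one_ne_zero]) (by apply_rules [mul_ne_zero, one_ne_zero])] <;> ring
  have h6 : A4map^[6] x = ![((x 2)*(x 3)+(x 1)*(x 2)*(x 3)+(x 0)*(x 3)+(x 0)*(x 1)+(x 0)*(x 1)*(x 2))/((x 0)*(x 1)*(x 2)*(x 3)), ((x 2)*(x 3)+(x 0)*(x 3)+(x 0)*(x 1)+(x 0)*(x 1)*(x 2))/((x 1)*(x 2)*(x 3)), ((x 3)+(x 1)+(x 1)*(x 2))/((x 2)*(x 3)), (1+(x 2))/((x 3))] := by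
    rw [Function.iterate_succ_apply', h5]
    refine A4map_eq _ _ (div_ne_zero hd one_ne_zero) n3 n6 n8 ?_ ?_ ?_ ?_ <;>
      simp only [Matrix.cons_val_zero, Matrix.cons_val_one, Matrix.head_cons, Matrix.cons_val_two, Matrix.tail_cons, Matrix.cons_val_three, Fin.isValue, div_mul_div_comm] <;>
      rw [add_div' _ _ _ (by apply_rules [mul_ne_zero, one_ne_zero]), div_eq_div_iff (by apply_rules [mul_ne_zero, one_ne_zero]) (by apply_rules [mul_ne_zero, one_ne_zero])] <;> ring
  have h7 : A4map^[7] x = ![((x 0))/(1), ((x 1))/(1), ((x 2))/(1), ((x 3))/(1)] := by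
    rw [Function.iterate_succ_apply', h6]
    refine A4map_eq _ _ n4 n7 n9 n10 ?_ ?_ ?_ ?_ <;>
      simp only [Matrix.cons_val_zero, Matrix.cons_val_one, Matrix.head_cons, Matrix.cons_val_two, Matrix.tail_cons, Matrix.cons_val_three, Fin.isValue, div_mul_div_comm] <;>
      rw [add_div' _ _ _ (by apply_rules [mul_ne_zero, one_ne_zero]), div_eq_div_iff (by apply_rules [mul_ne_zero, one_ne_zero]) (by apply_rules [mul_ne_zero, one_ne_zero])] <;> ring
  rw [h7]
  funext i; fin_cases i <;> simp
end

section
/- The (2,2) sine-Gordon reduced map φ̂ preserves the symplectic form dy_1 ∧ dy_2/(y_1 y_2): if (ỹ_1, ỹ_2) = φ̂(y_1, y_2) then det Dφ̂(y_1,y_2) · y_1 y_2 = ỹ_1 ỹ_2. -/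
/-- The second component of the `(2,2)` sine-Gordon reduced map. -/
noncomputable def sg22snd (a₁ a₂ a₃ : ℝ) (p : ℝ × ℝ) : ℝ :=
  (1 / p.2) * ((a₁ * p.1 + a₃) / (a₂ * p.1 + a₁)) ^ 2

/-- The first component of the `(2,2)` sine-Gordon reduced map. -/
noncomputable def sg22fst (a₁ a₂ a₃ : ℝ) (p : ℝ × ℝ) : ℝ :=
  (1 / p.1) * ((a₁ * sg22snd a₁ a₂ a₃ p + a₃) / (a₂ * sg22snd a₁ a₂ a₃ p + a₁)) ^ 2

lemma hasDerivAt_mobius (a₁ a₂ a₃ x : ℝ) (hx : a₂ * x + a₁ ≠ 0) :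
    HasDerivAt (fun t => (a₁ * t + a₃) / (a₂ * t + a₁))
      ((a₁ * (a₂ * x + a₁) - (a₁ * x + a₃) * a₂) / (a₂ * x + a₁) ^ 2) x := by
  have h1 : HasDerivAt (fun t => a₁ * t + a₃) a₁ x := by
    simpa using ((hasDerivAt_id x).const_mul a₁).add_const a₃
  have h2 : HasDerivAt (fun t => a₂ * t + a₁) a₂ x := by
    simpa using ((hasDerivAt_id x).const_mul a₂).add_const a₁
  exact h1.div h2 hx

/-- The `(2,2)` sine-Gordon reduced map preserves the symplectic form
`dy₁ ∧ dy₂/(y₁y₂)`: the determinant of its Jacobian matrix times `y₁y₂` equals the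
product of the coordinates of the image point. -/
theorem sg22_symplectic (a₁ a₂ a₃ y₁ y₂ : ℝ)
    (h₁ : y₁ ≠ 0) (h₂ : y₂ ≠ 0)
    (hd₁ : a₂ * y₁ + a₁ ≠ 0)
    (hd₂ : a₂ * sg22snd a₁ a₂ a₃ (y₁, y₂) + a₁ ≠ 0) :
    (Matrix.det
      !![fderiv ℝ (sg22fst a₁ a₂ a₃) (y₁, y₂) (1, 0),
         fderiv ℝ (sg22fst a₁ a₂ a₃) (y₁, y₂) (0, 1);
         fderiv ℝ (sg22snd a₁ a₂ a₃) (y₁, y₂) (1, 0),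
         fderiv ℝ (sg22snd a₁ a₂ a₃) (y₁, y₂) (0, 1)]) * (y₁ * y₂)
      = sg22fst a₁ a₂ a₃ (y₁, y₂) * sg22snd a₁ a₂ a₃ (y₁, y₂) := by
  -- abbreviation for the image second coordinate
  set s : ℝ := sg22snd a₁ a₂ a₃ (y₁, y₂) with hsdef
  have hs : s = (1 / y₂) * ((a₁ * y₁ + a₃) / (a₂ * y₁ + a₁)) ^ 2 := rfl
  -- differentiability of the two components
  have da : DifferentiableAt ℝ (fun p : ℝ × ℝ => (1:ℝ) / p.2) (y₁, y₂) := by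
    simp only [one_div]
    exact differentiableAt_snd.inv h₂
  have db : DifferentiableAt ℝ (fun p : ℝ × ℝ => a₁ * p.1 + a₃) (y₁, y₂) :=
    (differentiableAt_fst.const_mul a₁).add_const a₃
  have dc : DifferentiableAt ℝ (fun p : ℝ × ℝ => a₂ * p.1 + a₁) (y₁, y₂) :=
    (differentiableAt_fst.const_mul a₂).add_const a₁
  have dq : DifferentiableAt ℝ
      (fun p : ℝ × ℝ => (a₁ * p.1 + a₃) / (a₂ * p.1 + a₁)) (y₁, y₂) := by
    simp only [div_eq_mul_inv]
    exact db.mul (dc.inv hd₁)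
  have dsnd : DifferentiableAt ℝ (sg22snd a₁ a₂ a₃) (y₁, y₂) := by
    have : DifferentiableAt ℝ
        (fun p : ℝ × ℝ => (1 / p.2) * ((a₁ * p.1 + a₃) / (a₂ * p.1 + a₁)) ^ 2) (y₁, y₂) :=
      da.mul (dq.pow 2)
    exact this
  have da' : DifferentiableAt ℝ (fun p : ℝ × ℝ => (1:ℝ) / p.1) (y₁, y₂) := by
    simp only [one_div]
    exact differentiableAt_fst.inv h₁
  have db' : DifferentiableAt ℝ (fun p : ℝ × ℝ => a₁ * sg22snd a₁ a₂ a₃ p + a₃) (y₁, y₂) :=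
    (dsnd.const_mul a₁).add_const a₃
  have dc' : DifferentiableAt ℝ (fun p : ℝ × ℝ => a₂ * sg22snd a₁ a₂ a₃ p + a₁) (y₁, y₂) :=
    (dsnd.const_mul a₂).add_const a₁
  have dq' : DifferentiableAt ℝ
      (fun p : ℝ × ℝ => (a₁ * sg22snd a₁ a₂ a₃ p + a₃) / (a₂ * sg22snd a₁ a₂ a₃ p + a₁))
      (y₁, y₂) := by
    simp only [div_eq_mul_inv]
    exact db'.mul (dc'.inv hd₂)
  have dfst : DifferentiableAt ℝ (sg22fst a₁ a₂ a₃) (y₁, y₂) := by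
    have : DifferentiableAt ℝ
        (fun p : ℝ × ℝ => (1 / p.1) *
          ((a₁ * sg22snd a₁ a₂ a₃ p + a₃) / (a₂ * sg22snd a₁ a₂ a₃ p + a₁)) ^ 2) (y₁, y₂) :=
      da'.mul (dq'.pow 2)
    exact this
  -- restriction to lines
  have line1 : HasDerivAt (fun t => sg22fst a₁ a₂ a₃ (t, y₂))
      (fderiv ℝ (sg22fst a₁ a₂ a₃) (y₁, y₂) (1, 0)) y₁ :=
    by have := dfst.hasFDerivAt.comp_hasDerivAt y₁ (HasDerivAt.prodMk (hasDerivAt_id y₁) (hasDerivAt_const y₁ y₂)); exact this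
  have line2 : HasDerivAt (fun t => sg22fst a₁ a₂ a₃ (y₁, t))
      (fderiv ℝ (sg22fst a₁ a₂ a₃) (y₁, y₂) (0, 1)) y₂ :=
    dfst.hasFDerivAt.comp_hasDerivAt y₂ ((hasDerivAt_const y₂ y₁).prodMk (hasDerivAt_id y₂))
  have line3 : HasDerivAt (fun t => sg22snd a₁ a₂ a₃ (t, y₂))
      (fderiv ℝ (sg22snd a₁ a₂ a₃) (y₁, y₂) (1, 0)) y₁ :=
    by have := dsnd.hasFDerivAt.comp_hasDerivAt y₁ (HasDerivAt.prodMk (hasDerivAt_id y₁) (hasDerivAt_const y₁ y₂)); exact this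
  have line4 : HasDerivAt (fun t => sg22snd a₁ a₂ a₃ (y₁, t))
      (fderiv ℝ (sg22snd a₁ a₂ a₃) (y₁, y₂) (0, 1)) y₂ :=
    dsnd.hasFDerivAt.comp_hasDerivAt y₂ ((hasDerivAt_const y₂ y₁).prodMk (hasDerivAt_id y₂))
  -- explicit derivatives along lines
  have hM1 := hasDerivAt_mobius a₁ a₂ a₃ y₁ hd₁
  have hM2 := hasDerivAt_mobius a₁ a₂ a₃ s hd₂
  have hsnd1 : HasDerivAt (fun t => sg22snd a₁ a₂ a₃ (t, y₂))
      ((1 / y₂) * ((2:ℕ) * ((a₁ * y₁ + a₃) / (a₂ * y₁ + a₁)) ^ 1 *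
        ((a₁ * (a₂ * y₁ + a₁) - (a₁ * y₁ + a₃) * a₂) / (a₂ * y₁ + a₁) ^ 2))) y₁ :=
    (hM1.pow 2).const_mul (1 / y₂)
  have hinv2 : HasDerivAt (fun t : ℝ => 1 / t) (-(y₂ ^ 2)⁻¹) y₂ := by
    simpa [one_div] using hasDerivAt_inv h₂
  have hsnd2 : HasDerivAt (fun t => sg22snd a₁ a₂ a₃ (y₁, t))
      (-(y₂ ^ 2)⁻¹ * ((a₁ * y₁ + a₃) / (a₂ * y₁ + a₁)) ^ 2) y₂ :=
    hinv2.mul_const (((a₁ * y₁ + a₃) / (a₂ * y₁ + a₁)) ^ 2)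
  have hcomp1 : HasDerivAt
      (fun t => (a₁ * sg22snd a₁ a₂ a₃ (t, y₂) + a₃) / (a₂ * sg22snd a₁ a₂ a₃ (t, y₂) + a₁))
      (((a₁ * (a₂ * s + a₁) - (a₁ * s + a₃) * a₂) / (a₂ * s + a₁) ^ 2) *
        ((1 / y₂) * ((2:ℕ) * ((a₁ * y₁ + a₃) / (a₂ * y₁ + a₁)) ^ 1 *
          ((a₁ * (a₂ * y₁ + a₁) - (a₁ * y₁ + a₃) * a₂) / (a₂ * y₁ + a₁) ^ 2)))) y₁ :=
    by have := HasDerivAt.comp y₁ hM2 hsnd1; exact this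
  have hcomp2 : HasDerivAt
      (fun t => (a₁ * sg22snd a₁ a₂ a₃ (y₁, t) + a₃) / (a₂ * sg22snd a₁ a₂ a₃ (y₁, t) + a₁))
      (((a₁ * (a₂ * s + a₁) - (a₁ * s + a₃) * a₂) / (a₂ * s + a₁) ^ 2) *
        (-(y₂ ^ 2)⁻¹ * ((a₁ * y₁ + a₃) / (a₂ * y₁ + a₁)) ^ 2)) y₂ :=
    by have := HasDerivAt.comp y₂ hM2 hsnd2; exact this
  have hinv1 : HasDerivAt (fun t : ℝ => 1 / t) (-(y₁ ^ 2)⁻¹) y₁ := by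
    simpa [one_div] using hasDerivAt_inv h₁
  have hf1 : HasDerivAt (fun t => sg22fst a₁ a₂ a₃ (t, y₂))
      (-(y₁ ^ 2)⁻¹ * ((a₁ * s + a₃) / (a₂ * s + a₁)) ^ 2 +
        (1 / y₁) * ((2:ℕ) * ((a₁ * s + a₃) / (a₂ * s + a₁)) ^ 1 *
          (((a₁ * (a₂ * s + a₁) - (a₁ * s + a₃) * a₂) / (a₂ * s + a₁) ^ 2) *
            ((1 / y₂) * ((2:ℕ) * ((a₁ * y₁ + a₃) / (a₂ * y₁ + a₁)) ^ 1 *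
              ((a₁ * (a₂ * y₁ + a₁) - (a₁ * y₁ + a₃) * a₂) / (a₂ * y₁ + a₁) ^ 2)))))) y₁ :=
    hinv1.mul (hcomp1.pow 2)
  have hf2 : HasDerivAt (fun t => sg22fst a₁ a₂ a₃ (y₁, t))
      ((1 / y₁) * ((2:ℕ) * ((a₁ * s + a₃) / (a₂ * s + a₁)) ^ 1 *
        (((a₁ * (a₂ * s + a₁) - (a₁ * s + a₃) * a₂) / (a₂ * s + a₁) ^ 2) *
          (-(y₂ ^ 2)⁻¹ * ((a₁ * y₁ + a₃) / (a₂ * y₁ + a₁)) ^ 2)))) y₂ :=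
    (hcomp2.pow 2).const_mul (1 / y₁)
  have e1 := line1.unique hf1
  have e2 := line2.unique hf2
  have e3 := line3.unique hsnd1
  have e4 := line4.unique hsnd2
  have hfst : sg22fst a₁ a₂ a₃ (y₁, y₂) = (1 / y₁) * ((a₁ * s + a₃) / (a₂ * s + a₁)) ^ 2 := rfl
  have key : ((a₁ * y₁ + a₃) / (a₂ * y₁ + a₁)) ^ 2 = s * y₂ := by
    rw [hs]; field_simp
  rw [Matrix.det_fin_two_of, e1, e2, e3, e4, hfst, key]
  push_cast
  field_simp
  have hd₂' : s * a₂ + a₁ ≠ 0 := by rw [mul_comm]; exact hd₂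
  rw [div_eq_div_iff (pow_ne_zero 3 hd₂') (pow_ne_zero 2 hd₂')]
  ring
end
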